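/- Let C be a finite index set of classes and let (D_c)_{c∈C} and (D'_c)_{c∈C} be two families of dictionaries over the same event alphabet. Let D_C = ⋃_{c∈C} D_c and D'_C = ⋃_{c∈C} D'_c denote the union dictionaries, and suppose D_C and D'_C satisfy Condition A2 and both families satisfy Condition A1 (the unprimed family with ambient set O(D_C) and class sets O(D_c), the primed family with ambient set O(D'_C) and class sets O(D'_c)). Then O(D_C) = O(D'_C) if and only if D_C = D'_C. -/

import Mathlib

/-- A separation of a sentence `E` with respect to a dictionary `D` is a list `S` of
pairwise distinct patterns, each belonging to `D`, whose concatenation equals `E`. -/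
def IsSeparation {𝓔 : Type*} (D : Finset (List 𝓔)) (S : List (List 𝓔)) (E : List 𝓔) : Prop :=
  S.Nodup ∧ (∀ w ∈ S, w ∈ D) ∧ S.flatten = E

/-- The set of sentences generated by a dictionary `D`: those admitting at least one
separation with respect to `D`. -/
def genSet {𝓔 : Type*} (D : Finset (List 𝓔)) : Set (List 𝓔) :=
  {E | ∃ S, IsSeparation D S E}

/-- Condition A2: every pattern in the dictionary of length at least 2 has pairwise
distinct entries. -/
def CondA2 {𝓔 : Type*} (D : Finset (List 𝓔)) : Prop :=
  ∀ w ∈ D, 2 ≤ w.length → w.Nodup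

/-- `maxLenWithout D e` is the maximal length of a sentence generated by `D` containing
no occurrence of the event `e` (as a supremum in `ℕ`; it is attained because separations
are duplicate-free lists of patterns from a finite dictionary). -/
noncomputable def maxLenWithout {𝓔 : Type*} (D : Finset (List 𝓔)) (e : 𝓔) : ℕ :=
  sSup {n | ∃ E ∈ genSet D, e ∉ E ∧ E.length = n}

/-- Condition A1 for a family of class dictionaries `Dc` with ambient dictionaries `amb`:
for every class `c` and event `e`, any sentence in the ambient sentence set of `c` that
contains a contiguous subsentence `E₁ ∈ O(Dc c)` having `maxLenWithout (Dc c) e`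
consecutive entries all different from `e` must itself lie in `O(Dc c)`. -/
def CondA1 {𝓔 : Type*} {C : Type*} (amb : C → Finset (List 𝓔))
    (Dc : C → Finset (List 𝓔)) : Prop :=
  ∀ (c : C) (e : 𝓔) (E : List 𝓔), E ∈ genSet (amb c) →
    (∃ E₁, E₁ <:+: E ∧ E₁ ∈ genSet (Dc c) ∧
      ∃ R, R <:+: E₁ ∧ R.length = maxLenWithout (Dc c) e ∧ e ∉ R) →
    E ∈ genSet (Dc c)


section DictIdentAux
set_option linter.unusedSectionVars false

namespace DictIdent
open List

variable {𝓔 : Type*}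

/-! ### A lexicographic order on lists -/

section Lex
variable [LinearOrder 𝓔]

def lexle : List 𝓔 → List 𝓔 → Prop
  | [], _ => True
  | _ :: _, [] => False
  | a :: x, b :: y => a < b ∨ (a = b ∧ lexle x y)

theorem lexle_refl : ∀ l : List 𝓔, lexle l l := by
  intro l; induction l with
  | nil => trivial
  | cons a x ih => exact Or.inr ⟨rfl, ih⟩

theorem lexle_trans : ∀ {x y z : List 𝓔}, lexle x y → lexle y z → lexle x z := by
  intro x
  induction x with
  | nil => intro y z _ _; trivial
  | cons a x ih =>
    intro y z h1 h2
    cases y with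
    | nil => exact absurd h1 (by simp [lexle])
    | cons b y =>
      cases z with
      | nil => exact absurd h2 (by simp [lexle])
      | cons c z =>
        rcases h1 with h1 | ⟨rfl, h1⟩
        · rcases h2 with h2 | ⟨rfl, h2⟩
          · exact Or.inl (h1.trans h2)
          · exact Or.inl h1
        · rcases h2 with h2 | ⟨rfl, h2⟩
          · exact Or.inl h2
          · exact Or.inr ⟨rfl, ih h1 h2⟩

theorem lexle_antisymm : ∀ {x y : List 𝓔}, lexle x y → lexle y x → x = y := by
  intro x
  induction x with
  | nil =>
    intro y h1 h2
    cases y with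
    | nil => rfl
    | cons b y => exact absurd h2 (by simp [lexle])
  | cons a x ih =>
    intro y h1 h2
    cases y with
    | nil => exact absurd h1 (by simp [lexle])
    | cons b y =>
      rcases h1 with h1 | ⟨rfl, h1⟩
      · rcases h2 with h2 | ⟨rfl, h2⟩
        · exact absurd (h1.trans h2) (lt_irrefl _)
        · exact absurd h1 (lt_irrefl _)
      · rcases h2 with h2 | ⟨e, h2⟩
        · exact absurd h2 (lt_irrefl _)
        · rw [ih h1 h2]

theorem lexle_append_left (z : List 𝓔) {x y : List 𝓔} (h : lexle x y) :
    lexle (z ++ x) (z ++ y) := by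
  induction z with
  | nil => simpa
  | cons a z ih => exact Or.inr ⟨rfl, ih⟩

theorem lexle_append_right : ∀ {x y : List 𝓔} (w : List 𝓔), x.length = y.length →
    lexle x y → lexle (x ++ w) (y ++ w) := by
  intro x
  induction x with
  | nil =>
    intro y w hl _
    cases y with
    | nil => exact lexle_refl w
    | cons b y => simp at hl
  | cons a x ih =>
    intro y w hl h
    cases y with
    | nil => simp at hl
    | cons b y =>
      rcases h with h | ⟨rfl, h⟩
      · exact Or.inl h
      · exact Or.inr ⟨rfl, ih w (by simpa using hl) h⟩

theorem lexle_of_firstdiff : ∀ (i : ℕ) {x y : List 𝓔},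
    (∀ j < i, x[j]? = y[j]?) →
    (∃ a b, x[i]? = some a ∧ y[i]? = some b ∧ a < b) → lexle x y := by
  intro i
  induction i with
  | zero =>
    intro x y _ hd
    obtain ⟨a, b, ha, hb, hab⟩ := hd
    cases x with
    | nil => simp at ha
    | cons a' x =>
      cases y with
      | nil => simp at hb
      | cons b' y =>
        simp only [List.getElem?_cons_zero, Option.some.injEq] at ha hb
        exact Or.inl (ha ▸ hb ▸ hab)
  | succ i ih =>
    intro x y hag hd
    obtain ⟨a, b, ha, hb, hab⟩ := hd
    cases x with
    | nil => simp at ha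
    | cons a' x =>
      cases y with
      | nil => simp at hb
      | cons b' y =>
        have h0 := hag 0 (Nat.succ_pos i)
        simp only [List.getElem?_cons_zero, Option.some.injEq] at h0
        refine Or.inr ⟨h0, ih (fun j hj => ?_) ⟨a, b, by simpa using ha, by simpa using hb, hab⟩⟩
        have := hag (j + 1) (by omega)
        simpa using this

end Lex

/-! ### The cyclic-stream total preorder on words -/

section Stream
variable [LinearOrder 𝓔] [Inhabited 𝓔]

def keyf (u : List 𝓔) (i : ℕ) : 𝓔 := u[i % u.length]?.getD default

theorem keyf_eq_getElem (u : List 𝓔) (hu : u ≠ []) (i : ℕ) :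
    keyf u i = u[i % u.length]'(Nat.mod_lt _ (List.length_pos_iff.2 hu)) := by
  unfold keyf
  rw [List.getElem?_eq_getElem (Nat.mod_lt _ (List.length_pos_iff.2 hu))]
  rfl

theorem keyf_eq_getElem_of_lt (u : List 𝓔) {i : ℕ} (hi : i < u.length) :
    keyf u i = u[i] := by
  have hu : u ≠ [] := by rintro rfl; simp at hi
  rw [keyf_eq_getElem u hu i]
  simp [Nat.mod_eq_of_lt hi]

theorem keyf_self_length (u : List 𝓔) (hu : u ≠ []) :
    keyf u u.length = u[0]'(List.length_pos_iff.2 hu) := by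
  rw [keyf_eq_getElem u hu]
  simp

def FLT (f g : ℕ → 𝓔) : Prop := ∃ i, (∀ j < i, f j = g j) ∧ f i < g i

def SLE (u v : List 𝓔) : Prop :=
  (keyf u = keyf v ∧ u.length ≤ v.length) ∨ FLT (keyf u) (keyf v)

theorem FLT_irrefl (f : ℕ → 𝓔) : ¬ FLT f f := by
  rintro ⟨i, _, h⟩; exact lt_irrefl _ h

theorem FLT_trans {f g h : ℕ → 𝓔} (h1 : FLT f g) (h2 : FLT g h) : FLT f h := by
  obtain ⟨i, hai, hi⟩ := h1
  obtain ⟨k, hak, hk⟩ := h2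
  rcases lt_trichotomy i k with hik | rfl | hki
  · exact ⟨i, fun j hj => (hai j hj).trans (hak j (hj.trans hik)), hi.trans_le (hak i hik).le⟩
  · exact ⟨i, fun j hj => (hai j hj).trans (hak j hj), hi.trans hk⟩
  · exact ⟨k, fun j hj => (hai j (hj.trans hki)).trans (hak j hj), (hai k hki) ▸ hk⟩

theorem FLT_asymm {f g : ℕ → 𝓔} (h1 : FLT f g) : ¬ FLT g f :=
  fun h2 => FLT_irrefl f (FLT_trans h1 h2)

theorem SLE_trans {u v w : List 𝓔} (h1 : SLE u v) (h2 : SLE v w) : SLE u w := by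
  rcases h1 with ⟨e1, l1⟩ | f1
  · rcases h2 with ⟨e2, l2⟩ | f2
    · exact Or.inl ⟨e1.trans e2, l1.trans l2⟩
    · exact Or.inr (e1 ▸ f2)
  · rcases h2 with ⟨e2, l2⟩ | f2
    · exact Or.inr (e2 ▸ f1)
    · exact Or.inr (FLT_trans f1 f2)

theorem SLE_total (u v : List 𝓔) : SLE u v ∨ SLE v u := by
  by_cases h : keyf u = keyf v
  · rcases le_total u.length v.length with hl | hl
    · exact Or.inl (Or.inl ⟨h, hl⟩)
    · exact Or.inr (Or.inl ⟨h.symm, hl⟩)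
  · have hne : ∃ i, keyf u i ≠ keyf v i := by
      by_contra hc
      push_neg at hc
      exact h (funext hc)
    classical
    have hfind := Nat.find_spec hne
    have hag : ∀ j < Nat.find hne, keyf u j = keyf v j := by
      intro j hj
      have := Nat.find_min hne hj
      simpa using this
    rcases lt_or_gt_of_ne hfind with hlt | hgt
    · exact Or.inl (Or.inr ⟨Nat.find hne, hag, hlt⟩)
    · exact Or.inr (Or.inr ⟨Nat.find hne, fun j hj => (hag j hj).symm, hgt⟩)

theorem eq_of_keyf_eq {u v : List 𝓔} (hk : keyf u = keyf v) (hl : u.length = v.length) :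
    u = v := by
  apply List.ext_getElem hl
  intro i h1 h2
  rw [← keyf_eq_getElem_of_lt u h1, ← keyf_eq_getElem_of_lt v h2, hk]

theorem SLE_antisymm {u v : List 𝓔} (h1 : SLE u v) (h2 : SLE v u) : u = v := by
  rcases h1 with ⟨e1, l1⟩ | f1
  · rcases h2 with ⟨e2, l2⟩ | f2
    · exact eq_of_keyf_eq e1 (le_antisymm l1 l2)
    · exact absurd (e1 ▸ f2) (FLT_irrefl _)
  · rcases h2 with ⟨e2, l2⟩ | f2
    · exact absurd (e2 ▸ f1) (FLT_irrefl _)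
    · exact absurd f2 (FLT_asymm f1)

theorem bridge {u v : List 𝓔} (hu : u ≠ []) (hv : v ≠ []) (hnu : u.Nodup) (hnv : v.Nodup)
    (h : SLE u v) : lexle (u ++ v) (v ++ u) := by
  have hul : 0 < u.length := List.length_pos_iff.2 hu
  have hvl : 0 < v.length := List.length_pos_iff.2 hv
  rcases h with ⟨hk, hl⟩ | ⟨i, hag, hlt⟩
  · rcases eq_or_lt_of_le hl with heq | hlen
    · rw [eq_of_keyf_eq hk heq]
      exact lexle_refl _
    · exfalso
      have e1 : v[u.length]'hlen = v[0]'hvl := by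
        rw [← keyf_eq_getElem_of_lt v hlen, ← hk, keyf_self_length u hu,
          ← keyf_eq_getElem_of_lt u hul, hk, keyf_eq_getElem_of_lt v hvl]
      have := (hnv.getElem_inj_iff).1 e1
      omega
  · by_cases hiu : i < u.length <;> by_cases hiv : i < v.length
    · apply lexle_of_firstdiff i
      · intro j hj
        have hju : j < u.length := hj.trans hiu
        have hjv : j < v.length := hj.trans hiv
        rw [List.getElem?_append_left hju, List.getElem?_append_left hjv,
          List.getElem?_eq_getElem hju, List.getElem?_eq_getElem hjv]
        have := hag j hj
        rw [keyf_eq_getElem_of_lt u hju, keyf_eq_getElem_of_lt v hjv] at this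
        rw [this]
      · refine ⟨u[i], v[i], ?_, ?_, ?_⟩
        · rw [List.getElem?_append_left hiu, List.getElem?_eq_getElem hiu]
        · rw [List.getElem?_append_left hiv, List.getElem?_eq_getElem hiv]
        · rwa [keyf_eq_getElem_of_lt u hiu, keyf_eq_getElem_of_lt v hiv] at hlt
    · have hvi : v.length ≤ i := le_of_not_gt hiv
      have hvu : v.length < u.length := lt_of_le_of_lt hvi hiu
      have htake : ∀ j (hj : j < v.length), u[j]'(hj.trans hvu) = v[j]'hj := by
        intro j hj
        have := hag j (lt_of_lt_of_le hj hvi)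
        rwa [keyf_eq_getElem_of_lt u (hj.trans hvu), keyf_eq_getElem_of_lt v hj] at this
      have hieq : i = v.length := by
        by_contra hne
        have hvi' : v.length < i := lt_of_le_of_ne hvi (Ne.symm hne)
        have e := hag v.length hvi'
        rw [keyf_eq_getElem_of_lt u hvu, keyf_self_length v hv] at e
        have e2 : u[v.length]'hvu = u[0]'hul := by rw [e, ← htake 0 hvl]
        have := (hnu.getElem_inj_iff).1 e2
        omega
      subst hieq
      rw [keyf_eq_getElem_of_lt u hiu, keyf_self_length v hv] at hlt
      have hlt' : u[v.length]'hiu < u[0]'hul := by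
        rw [← htake 0 hvl] at hlt; exact hlt
      apply lexle_of_firstdiff v.length
      · intro j hj
        have hju : j < u.length := hj.trans hvu
        rw [List.getElem?_append_left hju, List.getElem?_append_left hj,
          List.getElem?_eq_getElem hju, List.getElem?_eq_getElem hj, htake j hj]
      · refine ⟨u[v.length]'hiu, u[0]'hul, ?_, ?_, hlt'⟩
        · rw [List.getElem?_append_left hiu, List.getElem?_eq_getElem hiu]
        · rw [List.getElem?_append_right (le_refl v.length)]
          simp only [Nat.sub_self]
          rw [List.getElem?_eq_getElem hul]
    · have hui : u.length ≤ i := le_of_not_gt hiu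
      have huv : u.length < v.length := lt_of_le_of_lt hui hiv
      have htake : ∀ j (hj : j < u.length), u[j]'hj = v[j]'(hj.trans huv) := by
        intro j hj
        have := hag j (lt_of_lt_of_le hj hui)
        rwa [keyf_eq_getElem_of_lt u hj, keyf_eq_getElem_of_lt v (hj.trans huv)] at this
      have hieq : i = u.length := by
        by_contra hne
        have hui' : u.length < i := lt_of_le_of_ne hui (Ne.symm hne)
        have e := hag u.length hui'
        rw [keyf_self_length u hu, keyf_eq_getElem_of_lt v huv] at e
        have e2 : v[u.length]'huv = v[0]'hvl := by rw [← e, htake 0 hul]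
        have := (hnv.getElem_inj_iff).1 e2
        omega
      subst hieq
      rw [keyf_self_length u hu, keyf_eq_getElem_of_lt v hiv] at hlt
      apply lexle_of_firstdiff u.length
      · intro j hj
        have hjv : j < v.length := hj.trans huv
        rw [List.getElem?_append_left hj, List.getElem?_append_left hjv,
          List.getElem?_eq_getElem hj, List.getElem?_eq_getElem hjv, htake j hj]
      · refine ⟨v[0]'hvl, v[u.length]'hiv, ?_, ?_, ?_⟩
        · rw [List.getElem?_append_right (le_refl u.length)]
          simp only [Nat.sub_self]
          rw [List.getElem?_eq_getElem hvl]
        · rw [List.getElem?_append_left hiv, List.getElem?_eq_getElem hiv]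
        · rw [← htake 0 hul]; exact hlt
    · exfalso
      have hui : u.length ≤ i := le_of_not_gt hiu
      have hvi : v.length ≤ i := le_of_not_gt hiv
      rcases lt_trichotomy u.length v.length with hlen | hlen | hlen
      · have e := hag u.length (lt_of_lt_of_le hlen hvi)
        rw [keyf_self_length u hu, keyf_eq_getElem_of_lt v hlen] at e
        have e0 := hag 0 (lt_of_lt_of_le hul hui)
        rw [keyf_eq_getElem_of_lt u hul, keyf_eq_getElem_of_lt v hvl] at e0
        have e2 : v[u.length]'hlen = v[0]'hvl := by rw [← e, e0]
        have := (hnv.getElem_inj_iff).1 e2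
        omega
      · have : u = v := by
          apply List.ext_getElem hlen
          intro j h1 h2
          have := hag j (lt_of_lt_of_le h1 hui)
          rwa [keyf_eq_getElem_of_lt u h1, keyf_eq_getElem_of_lt v h2] at this
        subst this
        exact lt_irrefl _ hlt
      · have e := hag v.length (lt_of_lt_of_le hlen hui)
        rw [keyf_self_length v hv, keyf_eq_getElem_of_lt u hlen] at e
        have e0 := hag 0 (lt_of_lt_of_le hvl hvi)
        rw [keyf_eq_getElem_of_lt u hul, keyf_eq_getElem_of_lt v hvl] at e0
        have e2 : u[v.length]'hlen = u[0]'hul := by rw [e, ← e0]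
        have := (hnu.getElem_inj_iff).1 e2
        omega

end Stream

/-! ### Sorted concatenations are lexicographically extremal -/

section SortMin
variable {LEQ : List 𝓔 → List 𝓔 → Prop}
  (hrefl : ∀ x, LEQ x x)
  (htrans : ∀ {x y z}, LEQ x y → LEQ y z → LEQ x z)
  (hpre : ∀ (z : List 𝓔) {x y}, LEQ x y → LEQ (z ++ x) (z ++ y))
  (hpost : ∀ {x y : List 𝓔} (w), x.length = y.length → LEQ x y → LEQ (x ++ w) (y ++ w))

include hrefl htrans hpre hpost

theorem leq_flatten_comm (u : List 𝓔) (A : List (List 𝓔))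
    (hA : ∀ x ∈ A, LEQ (u ++ x) (x ++ u)) :
    LEQ (u ++ A.flatten) (A.flatten ++ u) := by
  induction A with
  | nil => simpa using hrefl u
  | cons x A ih =>
    have h1 : LEQ ((u ++ x) ++ A.flatten) ((x ++ u) ++ A.flatten) :=
      hpost A.flatten (by simp [Nat.add_comm]) (hA x (by simp))
    have h2 : LEQ (x ++ (u ++ A.flatten)) (x ++ (A.flatten ++ u)) :=
      hpre x (ih (fun y hy => hA y (by simp [hy])))
    have e1 : (u ++ x) ++ A.flatten = u ++ (x :: A).flatten := by simp
    have e2 : (x ++ u) ++ A.flatten = x ++ (u ++ A.flatten) := by simp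
    have e3 : x ++ (A.flatten ++ u) = (x :: A).flatten ++ u := by simp
    rw [e1, e2] at h1
    rw [e3] at h2
    exact htrans h1 h2

theorem sortmin : ∀ (l l' : List (List 𝓔)), List.Perm l l' →
    l.Pairwise (fun x y => LEQ (x ++ y) (y ++ x)) → LEQ l.flatten l'.flatten := by
  intro l
  induction l with
  | nil =>
    intro l' hp _
    rw [hp.nil_eq.symm]
    exact hrefl _
  | cons u r ih =>
    intro l' hp hpw
    cases l' with
    | nil => exact absurd hp.symm.nil_eq (by simp)
    | cons v r' =>
      by_cases huv : u = v
      · subst huv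
        have hrr : List.Perm r r' := hp.cons_inv
        have h1 := ih r' hrr hpw.of_cons
        simpa using hpre u h1
      · have humem : u ∈ r' := by
          have : u ∈ v :: r' := hp.mem_iff.1 (by simp)
          simpa [huv] using this
        obtain ⟨A, B, rfl⟩ := List.append_of_mem humem
        have hperm2 : List.Perm r (v :: (A ++ B)) := by
          have step1 : List.Perm (v :: (A ++ u :: B)) (v :: (u :: (A ++ B))) :=
            List.Perm.cons v List.perm_middle
          have step2 : List.Perm (v :: (u :: (A ++ B))) (u :: (v :: (A ++ B))) :=
            List.Perm.swap _ _ _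
          exact (hp.trans (step1.trans step2)).cons_inv
        have hBRv : LEQ (u ++ v) (v ++ u) := by
          have hv_in_r : v ∈ r := hperm2.symm.mem_iff.1 (by simp)
          exact (List.pairwise_cons.1 hpw).1 v hv_in_r
        have hBRA : ∀ x ∈ A, LEQ (u ++ x) (x ++ u) := by
          intro x hx
          have hx_in_r : x ∈ r := hperm2.symm.mem_iff.1 (by simp [hx])
          exact (List.pairwise_cons.1 hpw).1 x hx_in_r
        have h1 : LEQ r.flatten (v :: (A ++ B)).flatten :=
          ih _ hperm2 hpw.of_cons
        have h2 : LEQ (u :: r).flatten (u ++ (v ++ (A.flatten ++ B.flatten))) := by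
          have := hpre u h1
          simpa using this
        have h3 : LEQ ((u ++ v) ++ (A.flatten ++ B.flatten))
            ((v ++ u) ++ (A.flatten ++ B.flatten)) :=
          hpost _ (by simp [Nat.add_comm]) hBRv
        have h4 : LEQ ((u ++ A.flatten) ++ B.flatten) ((A.flatten ++ u) ++ B.flatten) :=
          hpost _ (by simp [Nat.add_comm]) (leq_flatten_comm hrefl htrans hpre hpost u A hBRA)
        have h5 : LEQ (v ++ ((u ++ A.flatten) ++ B.flatten))
            (v ++ ((A.flatten ++ u) ++ B.flatten)) := hpre v h4
        have e2 : u ++ (v ++ (A.flatten ++ B.flatten)) = (u ++ v) ++ (A.flatten ++ B.flatten) := by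
          simp
        have e3 : (v ++ u) ++ (A.flatten ++ B.flatten) = v ++ ((u ++ A.flatten) ++ B.flatten) := by
          simp
        have e4 : v ++ ((A.flatten ++ u) ++ B.flatten) = (v :: (A ++ u :: B)).flatten := by
          simp
        rw [e2] at h2
        rw [e3] at h3
        rw [e4] at h5
        exact htrans h2 (htrans h3 h5)

end SortMin

/-! ### Existence of sorted enumerations -/

section SortEx
variable {α : Type*}

theorem minex (R : α → α → Prop) (htot : ∀ a b, R a b ∨ R b a)
    (htr : ∀ {a b c}, R a b → R b c → R a c) :
    ∀ (n : ℕ) (s : Finset α) [DecidableEq α], s.card ≤ n → s.Nonempty →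
      ∃ m ∈ s, ∀ x ∈ s, R m x := by
  intro n
  induction n with
  | zero =>
    intro s _ hcard hne
    rw [Nat.le_zero, Finset.card_eq_zero] at hcard
    exact absurd hcard hne.ne_empty
  | succ n ih =>
    intro s _ hcard hne
    obtain ⟨a, ha⟩ := hne
    by_cases hs : (s.erase a).Nonempty
    · obtain ⟨m, hm, hmin⟩ := ih (s.erase a) (by
        have := Finset.card_erase_of_mem ha
        omega) hs
      have hms : m ∈ s := Finset.mem_of_mem_erase hm
      rcases htot a m with ham | hma
      · refine ⟨a, ha, fun x hx => ?_⟩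
        by_cases hxa : x = a
        · subst hxa; rcases htot x x with h | h <;> exact h
        · exact htr ham (hmin x (Finset.mem_erase.2 ⟨hxa, hx⟩))
      · refine ⟨m, hms, fun x hx => ?_⟩
        by_cases hxa : x = a
        · subst hxa; exact hma
        · exact hmin x (Finset.mem_erase.2 ⟨hxa, hx⟩)
    · refine ⟨a, ha, fun x hx => ?_⟩
      have : x = a := by
        by_contra hxa
        exact hs ⟨x, Finset.mem_erase.2 ⟨hxa, hx⟩⟩
      subst this
      rcases htot x x with h | h <;> exact h

theorem sortex (R : α → α → Prop) (htot : ∀ a b, R a b ∨ R b a)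
    (htr : ∀ {a b c}, R a b → R b c → R a c) :
    ∀ (n : ℕ) (s : Finset α) [DecidableEq α], s.card ≤ n →
      ∃ l : List α, List.Perm l s.toList ∧ l.Pairwise R := by
  intro n
  induction n with
  | zero =>
    intro s _ hcard
    rw [Nat.le_zero, Finset.card_eq_zero] at hcard
    subst hcard
    exact ⟨[], by simp, List.Pairwise.nil⟩
  | succ n ih =>
    intro s _ hcard
    rcases s.eq_empty_or_nonempty with rfl | hne
    · exact ⟨[], by simp, List.Pairwise.nil⟩
    · obtain ⟨m, hm, hmin⟩ := minex R htot htr (n+1) s hcard hne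
      obtain ⟨l', hl'perm, hl'pw⟩ := ih (s.erase m) (by
        have := Finset.card_erase_of_mem hm
        omega)
      refine ⟨m :: l', ?_, ?_⟩
      · have h1 : List.Perm s.toList (m :: (s.erase m).toList) := by
          have h2 := Finset.toList_insert (Finset.notMem_erase m s)
          rw [Finset.insert_erase hm] at h2
          exact h2
        exact ((hl'perm.cons m).trans h1.symm)
      · refine List.Pairwise.cons (fun x hx => ?_) hl'pw
        have : x ∈ (s.erase m).toList := hl'perm.mem_iff.1 hx
        exact hmin x (Finset.mem_of_mem_erase (by simpa using this))

end SortEx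

/-! ### Full concatenations from the generated sentence set -/

theorem sum_len_sublist_le {s t : List (List 𝓔)} (h : s <+ t) :
    (s.map List.length).sum ≤ (t.map List.length).sum := by
  induction h with
  | slnil => exact le_refl _
  | cons a _ ih => simpa using le_trans ih (by simp)
  | cons_cons a _ ih => simpa using ih

theorem sublist_eq_of_sum_le {s t : List (List 𝓔)} (h : s <+ t)
    (hne : ∀ w ∈ t, w ≠ []) (hsum : (t.map List.length).sum ≤ (s.map List.length).sum) :
    s = t := by
  induction h with
  | slnil => rfl
  | cons a h ih =>
    exfalso
    have h1 := sum_len_sublist_le h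
    have ha : a.length ≥ 1 := by
      have := hne a (by simp)
      exact Nat.one_le_iff_ne_zero.2 (by simpa [List.length_eq_zero_iff] using this)
    simp only [List.map_cons, List.sum_cons] at hsum
    omega
  | cons_cons a h ih =>
    have : _ = _ := ih (fun w hw => hne w (by simp [hw])) (by
      simp only [List.map_cons, List.sum_cons] at hsum
      omega)
    rw [this]

/-- The set of "full concatenations" of `D`. -/
def candSet (D : Finset (List 𝓔)) : Set (List 𝓔) :=
  {E | ∃ S : List (List 𝓔), List.Perm S D.toList ∧ S.flatten = E}

theorem cand_subset_gen (D : Finset (List 𝓔)) : candSet D ⊆ genSet D := by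
  rintro E ⟨S, hperm, rfl⟩
  exact ⟨S, hperm.nodup_iff.2 (Finset.nodup_toList D), fun w hw =>
    (Finset.mem_toList).1 (hperm.mem_iff.1 hw), rfl⟩

theorem len_le_of_mem_gen {D : Finset (List 𝓔)} {E : List 𝓔} (h : E ∈ genSet D) :
    E.length ≤ ((D.toList).map List.length).sum := by
  obtain ⟨S, hnd, hmem, rfl⟩ := h
  have hsub : S <+~ D.toList :=
    hnd.subperm (fun a ha => (Finset.mem_toList).2 (hmem a ha))
  obtain ⟨S', hS'perm, hS'sub⟩ := hsub
  have h1 : (S.map List.length).sum = (S'.map List.length).sum :=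
    ((hS'perm.map List.length).sum_eq).symm
  rw [List.length_flatten, h1]
  exact sum_len_sublist_le hS'sub

theorem mem_cand_of_len {D : Finset (List 𝓔)} (hne : ∀ w ∈ D, w ≠ []) {E : List 𝓔}
    (h : E ∈ genSet D) (hlen : E.length = ((D.toList).map List.length).sum) :
    E ∈ candSet D := by
  obtain ⟨S, hnd, hmem, rfl⟩ := h
  have hsub : S <+~ D.toList :=
    hnd.subperm (fun a ha => (Finset.mem_toList).2 (hmem a ha))
  obtain ⟨S', hS'perm, hS'sub⟩ := hsub
  have h1 : (S.map List.length).sum = (S'.map List.length).sum :=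
    ((hS'perm.map List.length).sum_eq).symm
  rw [List.length_flatten, h1] at hlen
  have : S' = D.toList := sublist_eq_of_sum_le hS'sub
    (fun w hw => hne w ((Finset.mem_toList).1 hw)) (le_of_eq hlen.symm)
  exact ⟨S, (this ▸ hS'perm).symm, rfl⟩

theorem len_cand {D : Finset (List 𝓔)} {E : List 𝓔} (h : E ∈ candSet D) :
    E.length = ((D.toList).map List.length).sum := by
  obtain ⟨S, hperm, rfl⟩ := h
  rw [List.length_flatten]
  exact (hperm.map List.length).sum_eq

theorem cand_nonempty (D : Finset (List 𝓔)) : (candSet D).Nonempty :=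
  ⟨(D.toList).flatten, D.toList, List.Perm.refl _, rfl⟩

theorem candSet_eq_of_genSet_eq {D D' : Finset (List 𝓔)}
    (hne : ∀ w ∈ D, w ≠ []) (hne' : ∀ w ∈ D', w ≠ [])
    (h : genSet D = genSet D') : candSet D = candSet D' := by
  have hLL : ((D.toList).map List.length).sum = ((D'.toList).map List.length).sum := by
    obtain ⟨E, hE⟩ := cand_nonempty D
    obtain ⟨E', hE'⟩ := cand_nonempty D'
    have h1 : E ∈ genSet D' := h ▸ cand_subset_gen D hE
    have h2 : E' ∈ genSet D := h.symm ▸ cand_subset_gen D' hE'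
    have l1 := len_le_of_mem_gen h1
    have l2 := len_le_of_mem_gen h2
    rw [len_cand hE] at l1
    rw [len_cand hE'] at l2
    omega
  ext E
  constructor
  · intro hE
    exact mem_cand_of_len hne' (h ▸ cand_subset_gen D hE) (by rw [← hLL]; exact len_cand hE)
  · intro hE
    exact mem_cand_of_len hne (h.symm ▸ cand_subset_gen D' hE) (by rw [hLL]; exact len_cand hE)

/-! ### Peeling sorted enumerations from both ends -/

theorem eq_of_prefix_suffix {u u' : List 𝓔} (hu : u ≠ []) (hn : u'.Nodup)
    (h1 : u <+: u') (h2 : u <:+ u') : u = u' := by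
  obtain ⟨t, ht⟩ := h1
  obtain ⟨s, hs⟩ := h2
  rcases List.eq_nil_or_concat s with rfl | _
  · simpa using hs
  · have hul : 0 < u.length := List.length_pos_iff.2 hu
    have hsl : 0 < s.length := by
      rcases s with _ | ⟨a, s⟩
      · simp_all
      · simp
    have hlen : u'.length = s.length + u.length := by rw [← hs]; simp
    have h0 : u'[0]? = u[0]? := by
      rw [← ht, List.getElem?_append_left hul]
    have h1' : u'[s.length]? = u[0]? := by
      rw [← hs, List.getElem?_append_right (le_refl s.length)]
      simp
    have he := h0.trans h1'.symm
    rw [List.getElem?_eq_getElem (by omega), List.getElem?_eq_getElem (by omega),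
      Option.some_inj] at he
    have : (0 : ℕ) = s.length := (hn.getElem_inj_iff).1 he
    omega

theorem last_eq_head {R : List 𝓔 → List 𝓔 → Prop}
    (hanti : ∀ {u v : List 𝓔}, R u v → R v u → u = v)
    {u : List 𝓔} {r m₀ : List (List 𝓔)} {z : List 𝓔}
    (hpl : (u :: r).Pairwise R) (hpm : (m₀ ++ [z]).Pairwise (fun x y => R y x))
    (hperm : List.Perm (m₀ ++ [z]) (u :: r)) : z = u := by
  have hzle : ∀ x ∈ m₀, R z x := by
    intro x hx
    exact (List.pairwise_append.1 hpm).2.2 x hx z (by simp)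
  have humem : u ∈ m₀ ++ [z] := hperm.symm.mem_iff.1 (by simp)
  have hzmem : z ∈ u :: r := hperm.mem_iff.1 (by simp)
  rcases List.mem_append.1 humem with hu0 | hu1
  · rcases List.mem_cons.1 hzmem with hz0 | hz1
    · exact hz0
    · exact hanti (hzle u hu0) ((List.pairwise_cons.1 hpl).1 z hz1)
  · exact (List.mem_singleton.1 hu1).symm

theorem perm_peel {u : List 𝓔} {r m₀ : List (List 𝓔)}
    (hperm : List.Perm (m₀ ++ [u]) (u :: r)) : List.Perm m₀ r := by
  have h1 : List.Perm (u :: m₀) (m₀ ++ [u]) := by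
    have := (List.perm_middle (a := u) (l₁ := m₀) (l₂ := ([] : List (List 𝓔)))).symm
    simpa using this
  exact (h1.trans hperm).cons_inv

theorem core {R : List 𝓔 → List 𝓔 → Prop}
    (hanti : ∀ {u v : List 𝓔}, R u v → R v u → u = v) :
    ∀ (l l' m m' : List (List 𝓔)),
      (∀ w ∈ l, w ≠ [] ∧ w.Nodup) → (∀ w ∈ l', w ≠ [] ∧ w.Nodup) →
      l.Pairwise R → l'.Pairwise R →
      m.Pairwise (fun x y => R y x) → m'.Pairwise (fun x y => R y x) →
      List.Perm m l → List.Perm m' l' →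
      l.flatten = l'.flatten → m.flatten = m'.flatten → l = l' := by
  intro l
  induction l with
  | nil =>
    intro l' m m' _ hl' _ _ _ _ _ _ hf _
    cases l' with
    | nil => rfl
    | cons v r' =>
      exfalso
      have hv : v ≠ [] := (hl' v (by simp)).1
      have h0 := hf.symm
      simp only [List.flatten_cons, List.flatten_nil] at h0
      exact hv (List.append_eq_nil_iff.1 h0).1
  | cons u r ih =>
    intro l' m m' hl hl' hpl hpl' hpm hpm' hml hml' hf hg
    cases l' with
    | nil =>
      exfalso
      have hu : u ≠ [] := (hl u (by simp)).1
      have h0 := hf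
      simp only [List.flatten_cons, List.flatten_nil] at h0
      exact hu (List.append_eq_nil_iff.1 h0).1
    | cons v r' =>
      have hmne : m ≠ [] := by
        intro hm
        subst hm
        simpa using hml.nil_eq
      have hm'ne : m' ≠ [] := by
        intro hm
        subst hm
        simpa using hml'.nil_eq
      obtain ⟨m₀, z, rfl⟩ : ∃ m₀ z, m = m₀ ++ [z] := by
        rcases List.eq_nil_or_concat m with hcase | ⟨m₀, z, hcase⟩
        · exact absurd hcase hmne
        · exact ⟨m₀, z, by simpa using hcase⟩
      obtain ⟨m₀', z', rfl⟩ : ∃ m₀' z', m' = m₀' ++ [z'] := by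
        rcases List.eq_nil_or_concat m' with hcase | ⟨m₀', z', hcase⟩
        · exact absurd hcase hm'ne
        · exact ⟨m₀', z', by simpa using hcase⟩
      have hz : u = z := (last_eq_head hanti hpl hpm hml).symm
      have hz' : v = z' := (last_eq_head hanti hpl' hpm' hml').symm
      subst hz hz'
      have hpref_u : u <+: (u :: r).flatten := ⟨r.flatten, by simp⟩
      have hpref_v : v <+: (u :: r).flatten := by rw [hf]; exact ⟨r'.flatten, by simp⟩
      have hsuf_u : u <:+ (m₀ ++ [u]).flatten := ⟨m₀.flatten, by simp⟩
      have hsuf_v : v <:+ (m₀ ++ [u]).flatten := by rw [hg]; exact ⟨m₀'.flatten, by simp⟩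
      have huv : u = v := by
        have hune : u ≠ [] := (hl u (by simp)).1
        have hvne : v ≠ [] := (hl' v (by simp)).1
        rcases List.prefix_or_prefix_of_prefix hpref_u hpref_v with hp | hp
        · rcases List.suffix_or_suffix_of_suffix hsuf_u hsuf_v with hs | hs
          · exact eq_of_prefix_suffix hune (hl' v (by simp)).2 hp hs
          · exact (hp.eq_of_length (le_antisymm hp.length_le hs.length_le)).symm ▸ rfl
        · rcases List.suffix_or_suffix_of_suffix hsuf_u hsuf_v with hs | hs
          · exact (hp.eq_of_length (le_antisymm hp.length_le hs.length_le)).symm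
          · exact (eq_of_prefix_suffix hvne (hl u (by simp)).2 hp hs).symm
      subst huv
      have hf2 : r.flatten = r'.flatten := by
        have : u ++ r.flatten = u ++ r'.flatten := by simpa using hf
        exact List.append_cancel_left this
      have hg2 : m₀.flatten = m₀'.flatten := by
        have : m₀.flatten ++ u = m₀'.flatten ++ u := by
          have h1 : (m₀ ++ [u]).flatten = m₀.flatten ++ u := by simp
          have h2 : (m₀' ++ [u]).flatten = m₀'.flatten ++ u := by simp
          rw [← h1, ← h2]; exact hg
        exact List.append_cancel_right this
      have hrec := ih r' m₀ m₀'
        (fun w hw => hl w (by simp [hw])) (fun w hw => hl' w (by simp [hw]))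
        hpl.of_cons hpl'.of_cons
        (hpm.sublist (List.sublist_append_left _ _))
        (hpm'.sublist (List.sublist_append_left _ _))
        (perm_peel hml) (perm_peel hml') hf2 hg2
      rw [hrec]

/-! ### The identifiability theorem for a single dictionary -/

theorem dict_ident [DecidableEq 𝓔] (D D' : Finset (List 𝓔))
    (hD : ∀ w ∈ D, w ≠ [] ∧ w.Nodup) (hD' : ∀ w ∈ D', w ≠ [] ∧ w.Nodup)
    (h : genSet D = genSet D') : D = D' := by
  classical
  have hedge : ∀ (A B : Finset (List 𝓔)), (∀ w ∈ B, w ≠ [] ∧ w.Nodup) →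
      genSet A = genSet B → A = ∅ → B = ∅ := by
    intro A B hB hAB hA
    subst hA
    by_contra hBne
    obtain ⟨w, hw⟩ := Finset.nonempty_iff_ne_empty.2 hBne
    have hwB : w ∈ genSet B := ⟨[w], List.nodup_singleton w, by simp [hw], by simp⟩
    rw [← hAB] at hwB
    obtain ⟨S, hnd, hmem, hfl⟩ := hwB
    have hS : S = [] := by
      cases S with
      | nil => rfl
      | cons a S => exact absurd (hmem a (by simp)) (by simp)
    subst hS
    exact (hB w hw).1 (by simpa using hfl.symm)
  by_cases hDe : D = ∅
  · rw [hDe, hedge D D' hD' h hDe]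
  by_cases hD'e : D' = ∅
  · exact absurd (hedge D' D hD h.symm hD'e) hDe
  obtain ⟨w₀, hw₀⟩ := Finset.nonempty_iff_ne_empty.2 hDe
  letI : Inhabited 𝓔 := ⟨w₀.head (hD w₀ hw₀).1⟩
  letI : LinearOrder 𝓔 := LinearOrder.lift' embeddingToCardinal embeddingToCardinal.injective
  obtain ⟨lA, hlAp, hlApw⟩ := sortex (α := List 𝓔) SLE SLE_total
    (fun h1 h2 => SLE_trans h1 h2) D.card D le_rfl
  obtain ⟨lB, hlBp, hlBpw⟩ := sortex (α := List 𝓔) (fun x y => SLE y x)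
    (fun a b => SLE_total b a) (fun h1 h2 => SLE_trans h2 h1) D.card D le_rfl
  obtain ⟨lA', hlA'p, hlA'pw⟩ := sortex (α := List 𝓔) SLE SLE_total
    (fun h1 h2 => SLE_trans h1 h2) D'.card D' le_rfl
  obtain ⟨lB', hlB'p, hlB'pw⟩ := sortex (α := List 𝓔) (fun x y => SLE y x)
    (fun a b => SLE_total b a) (fun h1 h2 => SLE_trans h2 h1) D'.card D' le_rfl
  have hgoodA : ∀ w ∈ lA, w ≠ [] ∧ w.Nodup :=
    fun w hw => hD w (Finset.mem_toList.1 (hlAp.mem_iff.1 hw))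
  have hgoodB : ∀ w ∈ lB, w ≠ [] ∧ w.Nodup :=
    fun w hw => hD w (Finset.mem_toList.1 (hlBp.mem_iff.1 hw))
  have hgoodA' : ∀ w ∈ lA', w ≠ [] ∧ w.Nodup :=
    fun w hw => hD' w (Finset.mem_toList.1 (hlA'p.mem_iff.1 hw))
  have hgoodB' : ∀ w ∈ lB', w ≠ [] ∧ w.Nodup :=
    fun w hw => hD' w (Finset.mem_toList.1 (hlB'p.mem_iff.1 hw))
  have hbrA : lA.Pairwise (fun x y => lexle (x ++ y) (y ++ x)) := by
    refine hlApw.imp_of_mem ?_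
    intro a b ha hb hab
    exact bridge (hgoodA a ha).1 (hgoodA b hb).1 (hgoodA a ha).2 (hgoodA b hb).2 hab
  have hbrA' : lA'.Pairwise (fun x y => lexle (x ++ y) (y ++ x)) := by
    refine hlA'pw.imp_of_mem ?_
    intro a b ha hb hab
    exact bridge (hgoodA' a ha).1 (hgoodA' b hb).1 (hgoodA' a ha).2 (hgoodA' b hb).2 hab
  have hbrB : lB.Pairwise (fun x y => lexle (y ++ x) (x ++ y)) := by
    refine hlBpw.imp_of_mem ?_
    intro a b ha hb hab
    exact bridge (hgoodB b hb).1 (hgoodB a ha).1 (hgoodB b hb).2 (hgoodB a ha).2 hab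
  have hbrB' : lB'.Pairwise (fun x y => lexle (y ++ x) (x ++ y)) := by
    refine hlB'pw.imp_of_mem ?_
    intro a b ha hb hab
    exact bridge (hgoodB' b hb).1 (hgoodB' a ha).1 (hgoodB' b hb).2 (hgoodB' a ha).2 hab
  have hcand : candSet D = candSet D' :=
    candSet_eq_of_genSet_eq (fun w hw => (hD w hw).1) (fun w hw => (hD' w hw).1) h
  -- equality of lexicographic minima
  have hGle : lexle lA.flatten lA'.flatten := by
    have hmem' : lA'.flatten ∈ candSet D := by
      rw [hcand]
      exact ⟨lA', hlA'p, rfl⟩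
    obtain ⟨S, hSp, hSf⟩ := hmem'
    have hperm : List.Perm lA S := hlAp.trans hSp.symm
    have := sortmin lexle_refl lexle_trans lexle_append_left
      (fun w hlen hle => lexle_append_right w hlen hle) lA S hperm hbrA
    rwa [hSf] at this
  have hGge : lexle lA'.flatten lA.flatten := by
    have hmem' : lA.flatten ∈ candSet D' := by
      rw [← hcand]
      exact ⟨lA, hlAp, rfl⟩
    obtain ⟨S, hSp, hSf⟩ := hmem'
    have hperm : List.Perm lA' S := hlA'p.trans hSp.symm
    have := sortmin lexle_refl lexle_trans lexle_append_left
      (fun w hlen hle => lexle_append_right w hlen hle) lA' S hperm hbrA'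
    rwa [hSf] at this
  have hG : lA.flatten = lA'.flatten := lexle_antisymm hGle hGge
  -- equality of lexicographic maxima
  have hHge : lexle lB'.flatten lB.flatten := by
    have hmem' : lB'.flatten ∈ candSet D := by
      rw [hcand]
      exact ⟨lB', hlB'p, rfl⟩
    obtain ⟨S, hSp, hSf⟩ := hmem'
    have hperm : List.Perm lB S := hlBp.trans hSp.symm
    have := sortmin (LEQ := fun x y => lexle y x) (fun x => lexle_refl x)
      (fun h1 h2 => lexle_trans h2 h1) (fun z {x y} hxy => lexle_append_left z hxy)
      (fun {x y} w hlen hle => lexle_append_right w hlen.symm hle) lB S hperm hbrB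
    rw [hSf] at this
    exact this
  have hHle : lexle lB.flatten lB'.flatten := by
    have hmem' : lB.flatten ∈ candSet D' := by
      rw [← hcand]
      exact ⟨lB, hlBp, rfl⟩
    obtain ⟨S, hSp, hSf⟩ := hmem'
    have hperm : List.Perm lB' S := hlB'p.trans hSp.symm
    have := sortmin (LEQ := fun x y => lexle y x) (fun x => lexle_refl x)
      (fun h1 h2 => lexle_trans h2 h1) (fun z {x y} hxy => lexle_append_left z hxy)
      (fun {x y} w hlen hle => lexle_append_right w hlen.symm hle) lB' S hperm hbrB'
    rw [hSf] at this
    exact this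
  have hH : lB.flatten = lB'.flatten := lexle_antisymm hHle hHge
  have hcore : lA = lA' := core (R := SLE) (fun h1 h2 => SLE_antisymm h1 h2)
    lA lA' lB lB' hgoodA hgoodA' hlApw hlA'pw hlBpw hlB'pw
    (hlBp.trans hlAp.symm) (hlB'p.trans hlA'p.symm) hG hH
  have hperm : List.Perm D.toList D'.toList := by
    have := hlAp.symm.trans (hcore ▸ hlA'p)
    exact this
  ext w
  rw [← Finset.mem_toList, ← Finset.mem_toList (s := D')]
  exact hperm.mem_iff

end DictIdent
end DictIdentAux

/-- **The sentence set generated by an equivalence class determines its union dictionary.**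
Let `(Dc c)_{c ∈ C}` and `(Dc' c)_{c ∈ C}` be two finite families of dictionaries of
nonempty patterns with union dictionaries `DC` and `DC'`. If `DC` and `DC'` satisfy
Condition A2 and both families satisfy Condition A1 (with ambient sentence sets `O(DC)`
and `O(DC')` respectively), then `O(DC) = O(DC')` if and only if `DC = DC'`. -/
theorem union_dictionary_identifiable {𝓔 : Type*} [DecidableEq 𝓔]
    {C : Type*} [Fintype C]
    (Dc Dc' : C → Finset (List 𝓔))
    (hne : ∀ c, ∀ w ∈ Dc c, w ≠ []) (hne' : ∀ c, ∀ w ∈ Dc' c, w ≠ [])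
    (hA2 : CondA2 (Finset.univ.biUnion Dc)) (hA2' : CondA2 (Finset.univ.biUnion Dc'))
    (hA1 : CondA1 (fun _ : C => Finset.univ.biUnion Dc) Dc)
    (hA1' : CondA1 (fun _ : C => Finset.univ.biUnion Dc') Dc') :
    genSet (Finset.univ.biUnion Dc) = genSet (Finset.univ.biUnion Dc') ↔
      Finset.univ.biUnion Dc = Finset.univ.biUnion Dc' := by
  constructor
  · intro h
    have hnodup : ∀ w ∈ Finset.univ.biUnion Dc, w ≠ [] ∧ w.Nodup := by
      intro w hw
      obtain ⟨c, _, hc⟩ := Finset.mem_biUnion.1 hw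
      refine ⟨hne c w hc, ?_⟩
      match w with
      | [] => exact List.nodup_nil
      | [a] => exact List.nodup_singleton a
      | a :: b :: t => exact hA2 _ hw (by simp)
    have hnodup' : ∀ w ∈ Finset.univ.biUnion Dc', w ≠ [] ∧ w.Nodup := by
      intro w hw
      obtain ⟨c, _, hc⟩ := Finset.mem_biUnion.1 hw
      refine ⟨hne' c w hc, ?_⟩
      match w with
      | [] => exact List.nodup_nil
      | [a] => exact List.nodup_singleton a
      | a :: b :: t => exact hA2' _ hw (by simp)
    exact DictIdent.dict_ident _ _ hnodup hnodup' h
  · intro h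
    rw [h]
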